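/- For every pair (p, q) of states of a strongly-connected I-unfolding G and any two paths α, β from p to q, we have Δ(α) + L_G = Δ(β) + L_G. -/
import Mathlib


open scoped BigOperators

/-- A configuration is a vector in `ℕ^d`. -/
abbrev Cfg (d : ℕ) := Fin d → ℕ

/-- A Petri net action is a pair of configurations. -/
abbrev PNAction (d : ℕ) := Cfg d × Cfg d

/-- Displacement of an action. -/
def disp {d : ℕ} (a : PNAction d) : Fin d → ℤ :=
  fun i => (a.2 i : ℤ) - (a.1 i : ℤ)

/-- Infinity norm of an action. -/
def anorm {d : ℕ} (a : PNAction d) : ℕ :=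
  Finset.univ.sup fun i => max (a.1 i) (a.2 i)

/-- Infinity norm of a Petri net. -/
def netNorm {d : ℕ} (A : Finset (PNAction d)) : ℕ := A.sup anorm

/-- Step relation of a single action. -/
def Step {d : ℕ} (a : PNAction d) (x y : Cfg d) : Prop :=
  ∃ c : Cfg d, x = a.1 + c ∧ y = a.2 + c

/-- Step relation of a word of actions. -/
def Fires {d : ℕ} : List (PNAction d) → Cfg d → Cfg d → Prop
  | [], x, y => x = y
  | a :: σ, x, y => ∃ z, Step a x z ∧ Fires σ z y

/-- Displacement of a word of actions. -/
def wdisp {d : ℕ} (σ : List (PNAction d)) : Fin d → ℤ :=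
  (σ.map disp).sum

/-- Reachability relation of a Petri net. -/
def Reach {d : ℕ} (A : Finset (PNAction d)) (x y : Cfg d) : Prop :=
  ∃ σ : List (PNAction d), (∀ a ∈ σ, a ∈ A) ∧ Fires σ x y

/-- Mutual reachability. -/
def MutualReach {d : ℕ} (A : Finset (PNAction d)) (x y : Cfg d) : Prop :=
  Reach A x y ∧ Reach A y x

/-- A strongly connected component of configurations: an equivalence class of mutual
reachability. -/
def IsSCCC {d : ℕ} (A : Finset (PNAction d)) (C : Set (Cfg d)) : Prop :=
  ∃ c₀ : Cfg d, C = {x | MutualReach A c₀ x}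

/-- An `I`-configuration. -/
abbrev ICfg (d : ℕ) (I : Finset (Fin d)) := {i : Fin d // i ∈ I} → ℕ

/-- Restriction of a configuration to the components in `I`. -/
def restrictC {d : ℕ} (I : Finset (Fin d)) (c : Cfg d) : ICfg d I := fun i => c i.1

/-- Step relation of an action on `I`-configurations. -/
def IStep {d : ℕ} {I : Finset (Fin d)} (a : PNAction d) (p q : ICfg d I) : Prop :=
  ∃ c : ICfg d I, p = restrictC I a.1 + c ∧ q = restrictC I a.2 + c

/-- A transition of an `I`-unfolding. -/
abbrev UTrans (d : ℕ) (I : Finset (Fin d)) := ICfg d I × PNAction d × ICfg d I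

/-- Path from `p` to `q` in a transition set. -/
def IsPath {d : ℕ} {I : Finset (Fin d)} (T : Finset (UTrans d I)) :
    List (UTrans d I) → ICfg d I → ICfg d I → Prop
  | [], p, q => p = q
  | t :: π, p, q => t ∈ T ∧ t.1 = p ∧ IsPath T π t.2.2 q

/-- Label of a path. -/
def plabel {d : ℕ} {I : Finset (Fin d)} (π : List (UTrans d I)) : List (PNAction d) :=
  π.map fun t => t.2.1

/-- Displacement of a path. -/
def pdisp {d : ℕ} {I : Finset (Fin d)} (π : List (UTrans d I)) : Fin d → ℤ :=
  wdisp (plabel π)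

/-- An `I`-unfolding of a Petri net `A`. -/
structure Unfolding (d : ℕ) (I : Finset (Fin d)) (A : Finset (PNAction d)) where
  Q : Finset (ICfg d I)
  T : Finset (UTrans d I)
  Q_nonempty : Q.Nonempty
  T_mem : ∀ t ∈ T, t.1 ∈ Q ∧ t.2.1 ∈ A ∧ t.2.2 ∈ Q
  T_step : ∀ t ∈ T, IStep t.2.1 t.1 t.2.2
  connected : ∀ p ∈ Q, ∀ q ∈ Q, ∃ π, IsPath T π p q

/-- Structural reversibility. -/
def StructRev {d : ℕ} {I : Finset (Fin d)} {A : Finset (PNAction d)}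
    (G : Unfolding d I A) : Prop :=
  ∀ t ∈ G.T, ∃ π, IsPath G.T π t.2.2 t.1 ∧ wdisp (plabel (t :: π)) = 0

/-- Simple cycle on a state `q`. -/
def SimpleCycle {d : ℕ} {I : Finset (Fin d)} (T : Finset (UTrans d I))
    (π : List (UTrans d I)) (q : ICfg d I) : Prop :=
  IsPath T π q q ∧ π ≠ [] ∧ (π.map fun t => t.2.2).Nodup

/-- The lattice spanned by the displacements of the simple cycles of `G`. -/
def LG {d : ℕ} {I : Finset (Fin d)} {A : Finset (PNAction d)}
    (G : Unfolding d I A) : AddSubgroup (Fin d → ℤ) :=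
  AddSubgroup.closure {v | ∃ q ∈ G.Q, ∃ π, SimpleCycle G.T π q ∧ pdisp π = v}

/-- The coset `Δ(π) + L_G` for paths `π` from `p` to `q`. -/
def LpGq {d : ℕ} {I : Finset (Fin d)} {A : Finset (PNAction d)}
    (G : Unfolding d I A) (p q : ICfg d I) : Set (Fin d → ℤ) :=
  {v | ∃ π, IsPath G.T π p q ∧ v - pdisp π ∈ LG G}

/-- The bound `b := (3dm)^((d+2)^(2d+1))`. -/
def bVal (d m : ℕ) : ℕ := (3 * d * m) ^ ((d + 2) ^ (2 * d + 1))

/-- The threshold `m·r³·(3drm)^d`. -/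
def thrVal (d m r : ℕ) : ℕ := m * r ^ 3 * (3 * d * r * m) ^ d

/-- A pumping pair for `(q, G)`: a pair of words labeling cycles on `q` of length at
most `d·b^d`. -/
def PumpingPair {d : ℕ} {I : Finset (Fin d)} {A : Finset (PNAction d)}
    (G : Unfolding d I A) (q : ICfg d I) (u v : List (PNAction d)) : Prop :=
  (∃ α, IsPath G.T α q q ∧ plabel α = u ∧ α.length ≤ d * (bVal d (netNorm A)) ^ d) ∧
  (∃ β, IsPath G.T β q q ∧ plabel β = v ∧ β.length ≤ d * (bVal d (netNorm A)) ^ d)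

/-- The upward-closed set `U_{q,G}`. -/
def UqG {d : ℕ} {I : Finset (Fin d)} {A : Finset (PNAction d)}
    (G : Unfolding d I A) (q : ICfg d I) : Set (Cfg d) :=
  {c | q ≤ restrictC I c ∧ ∃ u v, PumpingPair G q u v ∧
    ∃ cm cp : Cfg d, Fires u cm c ∧ Fires v c cp ∧
      ∀ i : Fin d, i ∉ I →
        thrVal d (netNorm A) G.Q.card ≤ cm i ∧ thrVal d (netNorm A) G.Q.card ≤ cp i}

section Aux

variable {d : ℕ} {I : Finset (Fin d)}

lemma pdisp_nil : pdisp (d := d) (I := I) [] = 0 := by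
  simp [pdisp, plabel, wdisp]

lemma pdisp_append (xs ys : List (UTrans d I)) :
    pdisp (xs ++ ys) = pdisp xs + pdisp ys := by
  simp [pdisp, plabel, wdisp]

lemma isPath_append {T : Finset (UTrans d I)} {xs ys : List (UTrans d I)}
    {p s q : ICfg d I} (h1 : IsPath T xs p s) (h2 : IsPath T ys s q) :
    IsPath T (xs ++ ys) p q := by
  induction xs generalizing p with
  | nil => cases h1; exact h2
  | cons t xs ih =>
    obtain ⟨ht, h1a, h1b⟩ := h1
    exact ⟨ht, h1a, ih h1b⟩

lemma isPath_append_split {T : Finset (UTrans d I)} {xs ys : List (UTrans d I)}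
    {p q : ICfg d I} (h : IsPath T (xs ++ ys) p q) :
    ∃ s, IsPath T xs p s ∧ IsPath T ys s q := by
  induction xs generalizing p with
  | nil => exact ⟨p, rfl, h⟩
  | cons t xs ih =>
    obtain ⟨ht, ha, hb⟩ := h
    obtain ⟨s, h1, h2⟩ := ih hb
    exact ⟨s, ⟨ht, ha, h1⟩, h2⟩

lemma exists_dup_decomp {α : Type*} : ∀ {l : List α}, ¬ l.Nodup →
    ∃ (l₁ : List α) (a : α) (l₂ l₃ : List α), l = l₁ ++ a :: (l₂ ++ a :: l₃) := by
  intro l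
  induction l with
  | nil => intro h; simp at h
  | cons x xs ih =>
    intro h
    rw [List.nodup_cons] at h
    by_cases hx : x ∈ xs
    · obtain ⟨l₂, l₃, rfl⟩ := List.append_of_mem hx
      exact ⟨[], x, l₂, l₃, rfl⟩
    · have : ¬ xs.Nodup := fun hn => h ⟨hx, hn⟩
      obtain ⟨l₁, a, l₂, l₃, rfl⟩ := ih this
      exact ⟨x :: l₁, a, l₂, l₃, rfl⟩

lemma cycle_pdisp_mem {A : Finset (PNAction d)} (G : Unfolding d I A) :
    ∀ (n : ℕ) (π : List (UTrans d I)) (r : ICfg d I),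
      π.length ≤ n → IsPath G.T π r r → pdisp π ∈ LG G := by
  intro n
  induction n with
  | zero =>
    intro π r hlen hpath
    have : π = [] := List.length_eq_zero_iff.mp (Nat.le_zero.mp hlen)
    subst this
    rw [pdisp_nil]
    exact (LG G).zero_mem
  | succ n ih =>
    intro π r hlen hpath
    rcases π with _ | ⟨t0, rest⟩
    · rw [pdisp_nil]; exact (LG G).zero_mem
    by_cases hnd : ((t0 :: rest).map fun t => t.2.2).Nodup
    · -- simple cycle
      have hrQ : r ∈ G.Q := by
        obtain ⟨ht, ha, _⟩ := hpath
        have := (G.T_mem t0 ht).1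
        rwa [ha] at this
      exact AddSubgroup.subset_closure
        ⟨r, hrQ, t0 :: rest, ⟨hpath, by simp, hnd⟩, rfl⟩
    · -- find a duplicate and split
      obtain ⟨m₁, a, m₂, m₃, hm⟩ := exists_dup_decomp hnd
      -- pull back the decomposition through map
      rw [List.map_eq_append_iff] at hm
      obtain ⟨π₁, rest1, hπ, hmap1, hmap2⟩ := hm
      rw [List.map_eq_cons_iff] at hmap2
      obtain ⟨t, rest2, hrest1, hta, hmap3⟩ := hmap2
      rw [List.map_eq_append_iff] at hmap3
      obtain ⟨π₂, rest3, hrest2, hmap4, hmap5⟩ := hmap3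
      rw [List.map_eq_cons_iff] at hmap5
      obtain ⟨t', π₃, hrest3, hta', hmap6⟩ := hmap5
      subst hrest3 hrest2 hrest1
      -- π = π₁ ++ t :: (π₂ ++ t' :: π₃)
      rw [hπ] at hpath hlen ⊢
      obtain ⟨s₁, hP1, hP2⟩ := isPath_append_split hpath
      obtain ⟨ht, ht1, hP3⟩ := hP2
      obtain ⟨s₂, hP4, hP5⟩ := isPath_append_split hP3
      obtain ⟨ht', ht'1, hP6⟩ := hP5
      have htt' : t'.2.2 = t.2.2 := by rw [hta, hta']
      -- inner cycle: π₂ ++ [t'] from t.2.2 to t.2.2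
      have hinner : IsPath G.T (π₂ ++ [t']) t.2.2 t.2.2 := by
        refine isPath_append hP4 ⟨ht', ht'1.symm ▸ rfl, ?_⟩
        · exact htt'
      -- outer cycle: π₁ ++ t :: π₃ from r to r
      have houter : IsPath G.T (π₁ ++ t :: π₃) r r := by
        refine isPath_append hP1 ⟨ht, ht1, ?_⟩
        rw [htt'] at hP6
        exact hP6
      simp only [List.length_append, List.length_cons] at hlen
      have h1 : (π₂ ++ [t']).length ≤ n := by
        simp only [List.length_append, List.length_cons, List.length_nil]; omega
      have h2 : (π₁ ++ t :: π₃).length ≤ n := by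
        simp only [List.length_append, List.length_cons]; omega
      have m1 := ih _ _ h1 hinner
      have m2 := ih _ _ h2 houter
      have hsum : pdisp (π₁ ++ t :: (π₂ ++ t' :: π₃)) =
          pdisp (π₁ ++ t :: π₃) + pdisp (π₂ ++ [t']) := by
        simp only [pdisp, plabel, wdisp, List.map_append, List.map_cons,
          List.sum_append, List.sum_cons, List.map_nil, List.sum_nil]
        abel
      rw [hsum]
      exact (LG G).add_mem m2 m1

end Aux

/-- For every pair `(p, q)` of states of an `I`-unfolding `G` and
any two paths `α, β` from `p` to `q`, the cosets `Δ(α) + L_G` and `Δ(β) + L_G`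
coincide. -/
theorem path_displacement_coset_independent {d : ℕ} {I : Finset (Fin d)}
    {A : Finset (PNAction d)} (G : Unfolding d I A) (p q : ICfg d I)
    (hp : p ∈ G.Q) (hq : q ∈ G.Q)
    (α β : List (UTrans d I)) (hα : IsPath G.T α p q) (hβ : IsPath G.T β p q) :
    (fun w => pdisp α + w) '' (LG G : Set (Fin d → ℤ)) =
      (fun w => pdisp β + w) '' (LG G : Set (Fin d → ℤ)) := by
  obtain ⟨γ, hγ⟩ := G.connected q hq p hp
  have hαγ : pdisp (α ++ γ) ∈ LG G :=
    cycle_pdisp_mem G (α ++ γ).length _ _ le_rfl (isPath_append hα hγ)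
  have hβγ : pdisp (β ++ γ) ∈ LG G :=
    cycle_pdisp_mem G (β ++ γ).length _ _ le_rfl (isPath_append hβ hγ)
  rw [pdisp_append] at hαγ hβγ
  have key : pdisp α - pdisp β ∈ LG G := by
    have := (LG G).sub_mem hαγ hβγ
    simpa using this
  ext x
  constructor
  · rintro ⟨w, hw, rfl⟩
    refine ⟨pdisp α - pdisp β + w, (LG G).add_mem key hw, ?_⟩
    simp; abel
  · rintro ⟨w, hw, rfl⟩
    have key' : pdisp β - pdisp α ∈ LG G := by
      have := (LG G).neg_mem key
      simpa [neg_sub] using this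
    refine ⟨pdisp β - pdisp α + w, (LG G).add_mem key' hw, ?_⟩
    simp; abel
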